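/- Let $c(n,k)$ be the number of compositions of $n$ with exactly $k$ ones. Then for $k \ge 1$, $c(n,k) = \sum_{j=-1}^{n-k-1} f_j \cdot c(n-j-2, k-1)$, where $f_{-1} = 1$, $f_0 = 0$ and $f$ is the Fibonacci sequence. -/

import Mathlib

open List Finset

/-- `c n k` is the number of compositions of `n` with exactly `k` parts equal to `1`. -/
noncomputable def numCompositionsWithOnes (n k : ℕ) : ℕ :=
  Nat.card {l : List ℕ // (∀ x ∈ l, 0 < x) ∧ l.sum = n ∧ l.count 1 = k}

/-- The finset of compositions of `n` with exactly `k` ones. -/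
def cSet (n k : ℕ) : Finset (Composition n) :=
  Finset.univ.filter fun c => c.blocks.count 1 = k

@[simp] lemma mem_cSet {n k : ℕ} {c : Composition n} :
    c ∈ cSet n k ↔ c.blocks.count 1 = k := by simp [cSet]

lemma numComp_card (n k : ℕ) :
    numCompositionsWithOnes n k = (cSet n k).card := by
  rw [numCompositionsWithOnes]
  have e : {l : List ℕ // (∀ x ∈ l, 0 < x) ∧ l.sum = n ∧ l.count 1 = k} ≃
      {c : Composition n // c.blocks.count 1 = k} :=
    { toFun := fun l => ⟨⟨l.1, fun hi => l.2.1 _ hi, l.2.2.1⟩, l.2.2.2⟩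
      invFun := fun c => ⟨c.1.blocks, fun x hx => c.1.blocks_pos hx, c.1.blocks_sum, c.2⟩
      left_inv := fun l => rfl
      right_inv := fun c => Subtype.ext (Composition.ext rfl) }
  rw [Nat.card_congr e, Nat.card_eq_fintype_card, Fintype.card_subtype]
  rfl

/-- the prefix of `l` before the first `1` -/
def pre (l : List ℕ) : List ℕ := l.takeWhile (fun x => x != 1)

/-- the suffix of `l` after the first `1` -/
def suf (l : List ℕ) : List ℕ := (l.dropWhile (fun x => x != 1)).tail

lemma one_not_mem_pre (l : List ℕ) : 1 ∉ pre l := by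
  intro h
  have := List.mem_takeWhile_imp h
  simp at this

lemma count_pre (l : List ℕ) : (pre l).count 1 = 0 :=
  List.count_eq_zero.2 (one_not_mem_pre l)

lemma split_list {l : List ℕ} (h : 1 ∈ l) : l = pre l ++ 1 :: suf l := by
  have hd : l.dropWhile (fun x => x != 1) ≠ [] := by
    rw [Ne, List.dropWhile_eq_nil_iff]
    push_neg
    exact ⟨1, h, by simp⟩
  have hh := List.head_dropWhile_not (fun x => x != 1) (l := l) hd
  have hh1 : (l.dropWhile (fun x => x != 1)).head hd = 1 := by simpa using hh
  conv_lhs => rw [← List.takeWhile_append_dropWhile (p := fun x => x != 1) (l := l)]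
  rw [← List.cons_head_tail hd, hh1]
  rfl

lemma pre_append {p : List ℕ} (hp : 1 ∉ p) (s : List ℕ) :
    pre (p ++ 1 :: s) = p := by
  rw [pre, List.takeWhile_append_of_pos ?_]
  · simp
  · intro a ha
    simp only [bne_iff_ne, ne_eq]
    rintro rfl
    exact hp ha

lemma suf_append {p : List ℕ} (hp : 1 ∉ p) (s : List ℕ) :
    suf (p ++ 1 :: s) = s := by
  rw [suf, List.dropWhile_append_of_pos ?_]
  · simp
  · intro a ha
    simp only [bne_iff_ne, ne_eq]
    rintro rfl
    exact hp ha

lemma cons_headI_tail {l : List ℕ} (h : l ≠ []) : l.headI :: l.tail = l := by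
  cases l with
  | nil => exact absurd rfl h
  | cons a t => rfl

lemma a_zero : (cSet 0 0).card = 1 := by
  have hu : cSet 0 0 = Finset.univ := by
    ext c
    have hb : c.blocks = [] := by
      have hs := c.blocks_sum
      cases hbl : c.blocks with
      | nil => rfl
      | cons a t =>
        exfalso
        have ha : 0 < a := c.blocks_pos (by rw [hbl]; exact List.mem_cons_self)
        rw [hbl] at hs
        simp at hs
        omega
    simp [hb]
  rw [hu, Finset.card_univ, composition_card]
  norm_num

lemma blocks_one {c : Composition 1} : c.blocks = [1] := by
  have hs := c.blocks_sum
  cases hbl : c.blocks with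
  | nil => exfalso; rw [hbl] at hs; simp at hs
  | cons a t =>
    rw [hbl] at hs
    simp only [List.sum_cons] at hs
    have ha : 0 < a := c.blocks_pos (by rw [hbl]; exact List.mem_cons_self)
    have ht : t = [] := by
      cases hte : t with
      | nil => rfl
      | cons b u =>
        exfalso
        have hb : 0 < b := c.blocks_pos (by rw [hbl, hte]; simp)
        rw [hte] at hs; simp at hs; omega
    rw [ht] at hs ⊢
    simp at hs
    simp [hs]

lemma a_one : (cSet 1 0).card = 0 := by
  rw [Finset.card_eq_zero]
  ext c
  simp [blocks_one]

lemma blocks_ne_nil {m : ℕ} (c : Composition (m + 1)) : c.blocks ≠ [] := by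
  intro h
  have := c.blocks_sum
  rw [h] at this
  simp at this

/-- increment the head of a composition -/
def incHead {m : ℕ} (c : Composition (m + 1)) : Composition (m + 2) where
  blocks := (c.blocks.headI + 1) :: c.blocks.tail
  blocks_pos := by
    intro i hi
    rcases List.mem_cons.1 hi with h | h
    · omega
    · exact c.blocks_pos (List.mem_of_mem_tail h)
  blocks_sum := by
    have h1 : c.blocks.headI + c.blocks.tail.sum = m + 1 := by
      rw [← List.sum_cons, cons_headI_tail (blocks_ne_nil c)]
      exact c.blocks_sum
    simp only [List.sum_cons]
    omega

/-- prepend a `2` to a composition -/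
def cons2 {m : ℕ} (c : Composition m) : Composition (m + 2) where
  blocks := 2 :: c.blocks
  blocks_pos := by
    intro i hi
    rcases List.mem_cons.1 hi with h | h
    · omega
    · exact c.blocks_pos h
  blocks_sum := by
    simp only [List.sum_cons, c.blocks_sum]
    omega

lemma headI_blocks_ge_two {m : ℕ} {c : Composition (m + 1)} (hc : c.blocks.count 1 = 0) :
    2 ≤ c.blocks.headI := by
  have hne := blocks_ne_nil c
  have hmem : c.blocks.headI ∈ c.blocks := by
    rw [← cons_headI_tail hne]; simp
  have h1 : c.blocks.headI ≠ 1 := by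
    intro h
    rw [h] at hmem
    exact (List.count_eq_zero.1 hc) hmem
  have := c.blocks_pos hmem
  omega

lemma tail_count {m : ℕ} {c : Composition (m + 1)} (hc : c.blocks.count 1 = 0) :
    c.blocks.tail.count 1 = 0 := by
  have := cons_headI_tail (blocks_ne_nil c)
  rw [← this, List.count_cons] at hc
  omega

lemma a_rec (m : ℕ) :
    (cSet (m + 2) 0).card = (cSet (m + 1) 0).card + (cSet m 0).card := by
  classical
  have hunion : cSet (m + 2) 0 =
      (cSet (m + 1) 0).image incHead ∪ (cSet m 0).image cons2 := by
    ext c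
    simp only [Finset.mem_union, Finset.mem_image, mem_cSet]
    constructor
    · intro hc
      have hne : c.blocks ≠ [] := by
        intro h
        have := c.blocks_sum
        rw [h] at this
        simp at this
      obtain ⟨a, t, hbl⟩ : ∃ a t, c.blocks = a :: t := by
        cases hbl : c.blocks with
        | nil => exact absurd hbl hne
        | cons a t => exact ⟨a, t, rfl⟩
      have hmema : a ∈ c.blocks := by rw [hbl]; simp
      have hapos : 0 < a := c.blocks_pos hmema
      have hane : a ≠ 1 := by
        rintro rfl
        exact (List.count_eq_zero.1 hc) hmema
      have htpos : ∀ i ∈ t, 0 < i := fun i hi => c.blocks_pos (by rw [hbl]; simp [hi])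
      have hsum : a + t.sum = m + 2 := by
        have := c.blocks_sum
        rw [hbl] at this
        simpa using this
      have htcount : t.count 1 = 0 := by
        rw [hbl, List.count_cons] at hc
        omega
      rcases eq_or_lt_of_le (show 2 ≤ a by omega) with h2 | h3
      · right
        refine ⟨⟨t, fun {i} hi => htpos i hi, by omega⟩, htcount, ?_⟩
        apply Composition.ext
        simp [cons2, hbl, ← h2]
      · left
        refine ⟨⟨(a - 1) :: t, ?_, ?_⟩, ?_, ?_⟩
        · intro i hi
          rcases List.mem_cons.1 hi with h | h
          · omega
          · exact htpos i h
        · simp only [List.sum_cons]; omega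
        · rw [List.count_cons]
          simp only [htcount]
          have : ¬ ((1 : ℕ) = a - 1) := by omega
          simp [this]
          omega
        · apply Composition.ext
          simp only [incHead, hbl]
          simp only [List.headI_cons, List.tail_cons]
          congr 1
          omega
    · rintro (⟨c', hc', rfl⟩ | ⟨c', hc', rfl⟩)
      · simp only [incHead, List.count_cons]
        have h2 := headI_blocks_ge_two hc'
        have : ¬ ((1 : ℕ) = c'.blocks.headI + 1) := by omega
        simp [List.count_cons, this, tail_count hc']
        omega
      · simp only [cons2, List.count_cons]
        simp [hc']
  have hincinj : Function.Injective (incHead (m := m)) := by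
    intro c₁ c₂ h
    have hb : (c₁.blocks.headI + 1) :: c₁.blocks.tail = (c₂.blocks.headI + 1) :: c₂.blocks.tail := by
      have := congrArg Composition.blocks h
      simpa [incHead] using this
    apply Composition.ext
    rw [← cons_headI_tail (blocks_ne_nil c₁), ← cons_headI_tail (blocks_ne_nil c₂)]
    simp only [List.cons.injEq] at hb ⊢
    exact ⟨by omega, hb.2⟩
  have hconsinj : Function.Injective (cons2 (m := m)) := by
    intro c₁ c₂ h
    have := congrArg Composition.blocks h
    simp only [cons2, List.cons.injEq] at this
    exact Composition.ext this.2
  have hdisj : Disjoint ((cSet (m + 1) 0).image incHead) ((cSet m 0).image cons2) := by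
    rw [Finset.disjoint_left]
    rintro x hx₁ hx₂
    obtain ⟨c₁, hc₁, rfl⟩ := Finset.mem_image.1 hx₁
    obtain ⟨c₂, hc₂, heq⟩ := Finset.mem_image.1 hx₂
    have := congrArg (fun c : Composition (m + 2) => c.blocks.headI) heq
    simp only [cons2, incHead, List.headI_cons] at this
    have h2 := headI_blocks_ge_two (mem_cSet.1 hc₁)
    omega
  rw [hunion, Finset.card_union_of_disjoint hdisj,
    Finset.card_image_of_injective _ hincinj, Finset.card_image_of_injective _ hconsinj]

lemma a_int (f : ℤ → ℤ) (hf1 : f (-1) = 1) (hf0 : f 0 = 0)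
    (hf : ∀ m : ℤ, f (m + 1) = f m + f (m - 1)) :
    ∀ t : ℕ, ((cSet t 0).card : ℤ) = f ((t : ℤ) - 1)
  | 0 => by simp [a_zero, hf1]
  | 1 => by simp [a_one, hf0]
  | (t + 2) => by
    have h1 := a_int f hf1 hf0 hf (t + 1)
    have h2 := a_int f hf1 hf0 hf t
    push_cast at h1 h2 ⊢
    have e2 : ((t : ℤ) + 1 - 1) = t := by ring
    rw [e2] at h1
    have e1 : ((t : ℤ) + 2 - 1) = (t : ℤ) + 1 := by ring
    rw [a_rec]
    push_cast
    rw [e1, hf t, h1, h2]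

/-- The recurrence `c(n,k) = ∑_{j=-1}^{n-k-1} f_j · c(n-j-2, k-1)` for the number
of compositions of `n` with exactly `k ≥ 1` ones, where `f` is the Fibonacci
sequence extended by `f_{-1} = 1`.  The summation index is shifted by
`j = t - 1` with `t` ranging over `0, 1, …, n - k`. -/
theorem numCompositionsWithOnes_recurrence (n k : ℕ) (hk : 1 ≤ k) (hkn : k ≤ n)
    (f : ℤ → ℤ) (hf1 : f (-1) = 1) (hf0 : f 0 = 0)
    (hf : ∀ m : ℤ, f (m + 1) = f m + f (m - 1)) :
    (numCompositionsWithOnes n k : ℤ) =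
      ∑ t ∈ Finset.range (n - k + 1),
        f ((t : ℤ) - 1) * (numCompositionsWithOnes (n - t - 1) (k - 1) : ℤ) := by
  classical
  have key : ∀ c : Composition n, c.blocks.count 1 = k →
      1 ∈ c.blocks ∧ (suf c.blocks).sum = n - (pre c.blocks).sum - 1 ∧
      (suf c.blocks).count 1 = k - 1 ∧ (pre c.blocks).sum ≤ n - k := by
    intro c hc
    have h1 : 1 ∈ c.blocks := List.count_pos_iff.1 (by omega)
    have hsplit := split_list h1
    have hsum : (pre c.blocks).sum + (1 + (suf c.blocks).sum) = n := by
      have := c.blocks_sum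
      rw [hsplit] at this
      simpa using this
    have hcnt : (suf c.blocks).count 1 = k - 1 := by
      rw [hsplit, List.count_append, count_pre, List.count_cons] at hc
      simp at hc
      omega
    have hsuf_one : ∀ i ∈ suf c.blocks, 1 ≤ i := by
      intro i hi
      exact c.blocks_pos (by rw [hsplit]; simp [hi])
    have hlen : (suf c.blocks).count 1 ≤ (suf c.blocks).sum :=
      le_trans (List.count_le_length) (List.length_le_sum_of_one_le _ hsuf_one)
    exact ⟨h1, by omega, hcnt, by omega⟩
  rw [numComp_card]
  have hg : ∀ c ∈ cSet n k, (pre c.blocks).sum ∈ Finset.range (n - k + 1) := by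
    intro c hc
    rw [Finset.mem_range]
    have := (key c (mem_cSet.1 hc)).2.2.2
    omega
  rw [Finset.card_eq_sum_card_fiberwise hg]
  push_cast
  refine Finset.sum_congr rfl ?_
  intro t ht
  rw [Finset.mem_range] at ht
  have htn : t + 1 ≤ n := by omega
  have hfiber : ((cSet n k).filter (fun c => (pre c.blocks).sum = t)).card
      = ((cSet t 0) ×ˢ (cSet (n - t - 1) (k - 1))).card := by
    refine Finset.card_bij'
      (fun c hc =>
        (⟨pre c.blocks,
          fun hi => c.blocks_pos (by
            rw [split_list (key c (mem_cSet.1 (Finset.mem_filter.1 hc).1)).1]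
            exact List.mem_append_left _ hi),
          (Finset.mem_filter.1 hc).2⟩,
        ⟨suf c.blocks,
          fun hi => c.blocks_pos (by
            rw [split_list (key c (mem_cSet.1 (Finset.mem_filter.1 hc).1)).1]
            exact List.mem_append_right _ (List.mem_cons_of_mem _ hi)),
          by
            have hk2 := key c (mem_cSet.1 (Finset.mem_filter.1 hc).1)
            rw [hk2.2.1, (Finset.mem_filter.1 hc).2]⟩))
      (fun p hp =>
        ⟨p.1.blocks ++ 1 :: p.2.blocks,
          fun hi => by
            rcases List.mem_append.1 hi with h | h
            · exact p.1.blocks_pos h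
            · rcases List.mem_cons.1 h with h | h
              · omega
              · exact p.2.blocks_pos h,
          by
            rw [List.sum_append, List.sum_cons, p.1.blocks_sum, p.2.blocks_sum]
            omega⟩)
      ?_ ?_ ?_ ?_
    · intro c hc
      obtain ⟨hc1, hc2⟩ := Finset.mem_filter.1 hc
      have hk2 := key c (mem_cSet.1 hc1)
      rw [Finset.mem_product]
      constructor
      · rw [mem_cSet]
        exact count_pre c.blocks
      · rw [mem_cSet]
        exact hk2.2.2.1
    · intro p hp
      rw [Finset.mem_product] at hp
      obtain ⟨hp1, hp2⟩ := hp
      rw [mem_cSet] at hp1 hp2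
      have hnotone : 1 ∉ p.1.blocks := List.count_eq_zero.1 hp1
      rw [Finset.mem_filter]
      constructor
      · rw [mem_cSet]
        simp only [List.count_append, List.count_cons, hp1, hp2]
        simp
        omega
      · simp only [pre_append hnotone]
        exact p.1.blocks_sum
    · intro c hc
      apply Composition.ext
      simp only
      exact (split_list (key c (mem_cSet.1 (Finset.mem_filter.1 hc).1)).1).symm
    · intro p hp
      rw [Finset.mem_product] at hp
      obtain ⟨hp1, hp2⟩ := hp
      rw [mem_cSet] at hp1
      have hnotone : 1 ∉ p.1.blocks := List.count_eq_zero.1 hp1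
      ext : 1
      · apply Composition.ext
        simp only [pre_append hnotone]
      · apply Composition.ext
        simp only [suf_append hnotone]
  rw [hfiber, Finset.card_product]
  push_cast
  rw [a_int f hf1 hf0 hf t, numComp_card (n - t - 1) (k - 1)]
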